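/- Let N ≥ 2 be an integer and w ∈ E_N with w ≥ 0. Suppose 1 − δ = max_{s∈(0,1]} w(s)^N/s^{N−1} = w(a)^N/a^{N−1} with δ ∈ [0,1), a ∈ (0,1] and w(a) > 0. Then w(s) ≤ s·(w(a)/a) + (a − s)^{1/2} δ^{1/2} (w(a)/a)^{−(N−2)/2} for all s ∈ [0, a]. -/

import Mathlib

open MeasureTheory Real Set Filter

/-- `u` belongs to `E_N` with weak derivative `g`. -/
def MemEN (N : ℕ) (u g : ℝ → ℝ) : Prop :=
  (∀ s ∈ Set.Icc (0:ℝ) 1, u s = ∫ t in (0:ℝ)..s, g t) ∧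
  u 0 = 0 ∧
  IntervalIntegrable g MeasureTheory.volume 0 1 ∧
  MeasureTheory.IntegrableOn (fun t => |g t| ^ N) (Set.Ioc (0:ℝ) 1) ∧
  (∫ t in Set.Ioc (0:ℝ) 1, |g t| ^ N) = 1

lemma bern1 (m x : ℝ) (hm : 0 ≤ m) (hx : 0 ≤ x) :
    ∀ n : ℕ, m ^ (n+1) + (n+1) * m ^ n * x ≤ (m + x) ^ (n+1) := by
  intro n
  induction n with
  | zero => simp
  | succ n ih =>
    have h1 : (m + x) * (m ^ (n+1) + (n+1) * m ^ n * x) ≤ (m + x) * (m + x) ^ (n+1) :=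
      mul_le_mul_of_nonneg_left ih (by positivity)
    have h2 : 0 ≤ m ^ n * x * x := by positivity
    have h3 : 0 ≤ m ^ n := by positivity
    calc m ^ (n+2) + (↑(n+1)+1) * m ^ (n+1) * x
        ≤ (m + x) * (m ^ (n+1) + (n+1) * m ^ n * x) := by
          push_cast; ring_nf; nlinarith [h2, h3, mul_nonneg h3 hx]
      _ ≤ (m + x) * (m + x) ^ (n+1) := h1
      _ = (m + x) ^ (n+2) := by ring

lemma bern2 (x : ℝ) (hx0 : 0 ≤ x) (hx1 : x ≤ 1) :
    ∀ n : ℕ, 1 - (n+2) * x + x ^ 2 ≤ (1 - x) ^ (n+2) := by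
  intro n
  induction n with
  | zero => push_cast; nlinarith
  | succ n ih =>
    by_cases h : 1 - (n+2) * x + x ^ 2 ≤ 0
    · have hx : (0:ℝ) ≤ 1 - x := by linarith
      have : (0:ℝ) ≤ (1 - x) ^ (n+3) := pow_nonneg hx _
      push_cast
      push_cast at h
      nlinarith
    · push_neg at h
      have h1 : (1 - x) * (1 - (n+2) * x + x ^ 2) ≤ (1 - x) * (1 - x) ^ (n+2) :=
        mul_le_mul_of_nonneg_left ih (by linarith)
      calc 1 - (↑(n+1)+2) * x + x ^ 2
          ≤ (1 - x) * (1 - (n+2) * x + x ^ 2) := by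
            push_cast; nlinarith [sq_nonneg x, pow_le_pow_left₀ hx0 hx1 2]
        _ ≤ (1 - x) * (1 - x) ^ (n+2) := h1
        _ = (1 - x) ^ (n+3) := by ring

/-- `(m-u)^(k+2) ≥ m^(k+2) - (k+2) m^(k+1) u + m^k u²` for `0 ≤ u ≤ m`. -/
lemma mbern (m u : ℝ) (hm : 0 < m) (hu0 : 0 ≤ u) (hum : u ≤ m) (k : ℕ) :
    m ^ (k+2) - (k+2) * m ^ (k+1) * u + m ^ k * u ^ 2 ≤ (m - u) ^ (k+2) := by
  have hx0 : 0 ≤ u / m := by positivity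
  have hx1 : u / m ≤ 1 := (div_le_one hm).mpr hum
  have h := mul_le_mul_of_nonneg_left (bern2 (u/m) hx0 hx1 k) (le_of_lt (pow_pos hm (k+2)))
  have h1 : m ^ (k+2) * (1 - u/m) ^ (k+2) = (m - u) ^ (k+2) := by
    rw [← mul_pow]; congr 1; field_simp
  have h2 : m ^ (k+2) * (1 - (k+2) * (u/m) + (u/m) ^ 2)
      = m ^ (k+2) - (k+2) * m ^ (k+1) * u + m ^ k * u ^ 2 := by
    field_simp; ring
  rw [h1, h2] at h
  exact h

/-- Hölder/Jensen: `(∫ g)^N ≤ (d-c)^(N-1) ∫ |g|^N` on `Ioc c d`. -/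
lemma holder_aux (N : ℕ) (hN : 1 ≤ N) (g : ℝ → ℝ) (c d : ℝ) (hcd : c < d)
    (hg : IntegrableOn g (Ioc c d)) (hgN : IntegrableOn (fun t => |g t| ^ N) (Ioc c d)) :
    (∫ t in Ioc c d, g t) ^ N ≤ (d - c) ^ (N - 1) * ∫ t in Ioc c d, |g t| ^ N := by
  obtain ⟨n, rfl⟩ : ∃ n, N = n + 1 := ⟨N - 1, by omega⟩
  set μ := volume.restrict (Ioc c d) with hμ
  have hL : 0 < d - c := by linarith
  have hμuniv : μ univ = ENNReal.ofReal (d - c) := by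
    rw [hμ, Measure.restrict_apply_univ, Real.volume_Ioc]
  haveI : IsFiniteMeasure μ := ⟨by rw [hμuniv]; exact ENNReal.ofReal_lt_top⟩
  haveI : NeZero μ := ⟨by
    rw [← Measure.measure_univ_ne_zero, hμuniv]
    exact (ENNReal.ofReal_pos.mpr hL).ne'⟩
  have habs : Integrable (fun t => |g t|) μ := hg.abs
  have hcomp : Integrable ((fun x : ℝ => x ^ (n+1)) ∘ fun t => |g t|) μ := hgN
  have jensen := (convexOn_pow (𝕜 := ℝ) (n+1)).map_average_le
    (f := fun t => |g t|) (continuous_pow (n+1)).continuousOn isClosed_Ici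
    (ae_of_all _ fun t => mem_Ici.mpr (abs_nonneg _)) habs hcomp
  rw [average_eq, average_eq] at jensen
  rw [measureReal_def, hμuniv, ENNReal.toReal_ofReal hL.le] at jensen
  simp only [smul_eq_mul] at jensen
  have habs2 : (∫ t in Ioc c d, g t) ^ (n+1) ≤ (∫ t in Ioc c d, |g t|) ^ (n+1) := by
    calc (∫ t in Ioc c d, g t) ^ (n+1) ≤ |(∫ t in Ioc c d, g t) ^ (n+1)| := le_abs_self _
      _ = |∫ t in Ioc c d, g t| ^ (n+1) := by rw [abs_pow]
      _ ≤ (∫ t in Ioc c d, |g t|) ^ (n+1) := by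
          apply pow_le_pow_left₀ (abs_nonneg _)
          calc |∫ t in Ioc c d, g t| = ‖∫ t in Ioc c d, g t‖ := (Real.norm_eq_abs _).symm
            _ ≤ ∫ t in Ioc c d, ‖g t‖ := norm_integral_le_integral_norm _
            _ = ∫ t in Ioc c d, |g t| := by simp [Real.norm_eq_abs]
  refine habs2.trans ?_
  have hmul := mul_le_mul_of_nonneg_left jensen (le_of_lt (pow_pos hL (n+1)))
  calc (∫ t in Ioc c d, |g t|) ^ (n+1)
      = (d-c) ^ (n+1) * (((d-c)⁻¹ * ∫ t in Ioc c d, |g t|) ^ (n+1)) := by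
        rw [mul_pow, ← mul_pow]
        field_simp
        rw [div_pow]; field_simp
    _ ≤ (d-c) ^ (n+1) * ((d-c)⁻¹ * ∫ t in Ioc c d, |g t| ^ (n+1)) := hmul
    _ = (d - c) ^ (n+1-1) * ∫ t in Ioc c d, |g t| ^ (n+1) := by
        simp only [Nat.add_sub_cancel]
        rw [pow_succ]
        field_simp

set_option maxHeartbeats 1000000 in
/-- Lemma 3.3: if `w ∈ E_N`, `w ≥ 0`, and the maximum of
`s ↦ w(s)^N/s^{N-1}` over `(0,1]` equals `1 − δ` (`δ ∈ [0,1)`) and is attained at `a`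
with `w a > 0`, then `w(s) ≤ s (w(a)/a) + (a − s)^{1/2} δ^{1/2} (w(a)/a)^{−(N−2)/2}`
for all `s ∈ [0,a]`. -/
theorem bound_left_of_max (N : ℕ) (hN : 2 ≤ N) (w g : ℝ → ℝ) (hw : MemEN N w g)
    (hwpos : ∀ s ∈ Set.Icc (0:ℝ) 1, 0 ≤ w s)
    (a δ : ℝ) (ha : a ∈ Set.Ioc (0:ℝ) 1) (hδ : δ ∈ Set.Ico (0:ℝ) 1) (hwa : 0 < w a)
    (hmax : ∀ s ∈ Set.Ioc (0:ℝ) 1, w s ^ N / s ^ (N - 1) ≤ 1 - δ)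
    (heq : w a ^ N / a ^ (N - 1) = 1 - δ) :
    ∀ s ∈ Set.Icc (0:ℝ) a,
      w s ≤ s * (w a / a) +
        (a - s) ^ ((1:ℝ)/2) * δ ^ ((1:ℝ)/2) * (w a / a) ^ (-(((N : ℝ) - 2) / 2)) := by
  obtain ⟨hrep, hw0, hint, hintN, hnorm⟩ := hw
  obtain ⟨ha0, ha1⟩ := ha
  obtain ⟨hδ0, hδ1⟩ := hδ
  obtain ⟨k, rfl⟩ : ∃ k, N = k + 2 := ⟨N - 2, by omega⟩
  intro s hs
  obtain ⟨hs0, hsa⟩ := hs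
  set m := w a / a with hm
  clear_value m
  have hmpos : 0 < m := hm ▸ div_pos hwa ha0
  have hwam : w a = m * a := by rw [hm]; field_simp
  have hterm : 0 ≤ (a - s) ^ ((1:ℝ)/2) * δ ^ ((1:ℝ)/2) * m ^ (-((((k+2:ℕ) : ℝ) - 2) / 2)) :=
    mul_nonneg (mul_nonneg (Real.rpow_nonneg (by linarith) _) (Real.rpow_nonneg hδ0 _))
      (Real.rpow_nonneg hmpos.le _)
  by_cases htle : w s ≤ m * s
  · calc w s ≤ m * s := htle
      _ ≤ s * m + (a - s) ^ ((1:ℝ)/2) * δ ^ ((1:ℝ)/2) * m ^ (-((((k+2:ℕ) : ℝ) - 2) / 2)) := by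
          linarith [hterm]
  push_neg at htle
  set t := w s - m * s with hT
  clear_value t
  have ht : 0 < t := by rw [hT]; linarith
  have hspos : 0 < s := by
    rcases eq_or_lt_of_le hs0 with h | h
    · exfalso; rw [← h] at htle; rw [hw0] at htle; simp at htle
    · exact h
  have hlt : s < a := by
    rcases eq_or_lt_of_le hsa with h | h
    · exfalso; rw [h, hwam] at htle; exact lt_irrefl _ htle
    · exact h
  set b := a - s with hB
  clear_value b
  have hb : 0 < b := by rw [hB]; linarith
  have hsle1 : s ≤ 1 := le_trans hsa ha1
  have e1 : (k + 2) - 1 = k + 1 := rfl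
  -- bounds from the maximality hypothesis
  have hwsN : w s ^ (k+2) ≤ (1-δ) * s ^ (k+1) := by
    have h := hmax s ⟨hspos, hsle1⟩
    rw [e1, div_le_iff₀ (pow_pos hspos (k+1))] at h
    exact h
  have hwaN : w a ^ (k+2) = (1-δ) * a ^ (k+1) := by
    have h := heq
    rw [e1, div_eq_iff (pow_pos ha0 (k+1)).ne'] at h
    exact h
  have hδlt : (0:ℝ) < 1 - δ := by linarith
  have hwslt : w s < w a := by
    have h2 : (1-δ) * s ^ (k+1) < (1-δ) * a ^ (k+1) :=
      mul_lt_mul_of_pos_left (pow_lt_pow_left₀ hlt hs0 (Nat.succ_ne_zero k)) hδlt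
    have h3 : w s ^ (k+2) < w a ^ (k+2) := by rw [hwaN]; exact lt_of_le_of_lt hwsN h2
    exact lt_of_pow_lt_pow_left₀ (k+2) (hwpos a ⟨ha0.le, ha1⟩) h3
  have htmb : t < m * b := by
    rw [hT, hB]; rw [hwam] at hwslt; linarith only [hwslt]
  -- integrability on subintervals
  have hg01 : IntegrableOn g (Ioc 0 1) := hint.1
  have hg1 : IntegrableOn g (Ioc 0 s) := hg01.mono_set (Ioc_subset_Ioc le_rfl hsle1)
  have hg2 : IntegrableOn g (Ioc s a) := hg01.mono_set (Ioc_subset_Ioc hs0 ha1)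
  have hN1 : IntegrableOn (fun t => |g t| ^ (k+2)) (Ioc 0 s) :=
    hintN.mono_set (Ioc_subset_Ioc le_rfl hsle1)
  have hN2 : IntegrableOn (fun t => |g t| ^ (k+2)) (Ioc s a) :=
    hintN.mono_set (Ioc_subset_Ioc hs0 ha1)
  -- representations
  have hws_int : w s = ∫ t in Ioc 0 s, g t := by
    rw [hrep s ⟨hs0, hsle1⟩, intervalIntegral.integral_of_le hs0]
  have hwa_int : w a = ∫ t in Ioc 0 a, g t := by
    rw [hrep a ⟨ha0.le, ha1⟩, intervalIntegral.integral_of_le ha0.le]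
  have hIoc : Ioc (0:ℝ) a = Ioc 0 s ∪ Ioc s a := (Ioc_union_Ioc_eq_Ioc hs0 hsa).symm
  have hsplitg : (∫ t in Ioc (0:ℝ) a, g t) = (∫ t in Ioc (0:ℝ) s, g t) + ∫ t in Ioc s a, g t := by
    rw [hIoc, setIntegral_union (Ioc_disjoint_Ioc_of_le le_rfl) measurableSet_Ioc hg1 hg2]
  have hdiff : w a - w s = ∫ t in Ioc s a, g t := by
    rw [hws_int, hwa_int, hsplitg]; ring
  -- Hölder estimates
  have H1 := holder_aux (k+2) (by omega) g 0 s hspos hg1 hN1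
  rw [← hws_int, sub_zero, e1] at H1
  have H2 := holder_aux (k+2) (by omega) g s a hlt hg2 hN2
  rw [← hdiff, e1, ← hB] at H2
  -- splitting the total mass
  have hsplitN : (∫ x in Ioc (0:ℝ) a, |g x| ^ (k+2))
      = (∫ x in Ioc (0:ℝ) s, |g x| ^ (k+2)) + ∫ x in Ioc s a, |g x| ^ (k+2) := by
    rw [hIoc, setIntegral_union (Ioc_disjoint_Ioc_of_le le_rfl) measurableSet_Ioc hN1 hN2]
  have hmono : (∫ x in Ioc (0:ℝ) a, |g x| ^ (k+2)) ≤ 1 := by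
    rw [← hnorm]
    apply setIntegral_mono_set hintN
    · exact Eventually.of_forall fun x => by positivity
    · exact HasSubset.Subset.eventuallyLE (Ioc_subset_Ioc_right ha1)
  set I1 := ∫ x in Ioc (0:ℝ) s, |g x| ^ (k+2) with hI1def
  clear_value I1
  set I2 := ∫ x in Ioc s a, |g x| ^ (k+2) with hI2def
  clear_value I2
  have hsum : I1 + I2 ≤ 1 := by rw [← hsplitN]; exact hmono
  have hwseq : w s = m * s + t := by rw [hT]; ring
  -- lower bounds for the two pieces
  have hI1low : m ^ (k+2) * s + (k+2) * m ^ (k+1) * t ≤ I1 := by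
    have hb1 := bern1 (m*s) t (by positivity) ht.le (k+1)
    have key : s ^ (k+1) * (m ^ (k+2) * s + (k+2) * m ^ (k+1) * t) ≤ s ^ (k+1) * I1 := by
      calc s ^ (k+1) * (m ^ (k+2) * s + (k+2) * m ^ (k+1) * t)
          = (m*s) ^ ((k+1)+1) + ((k+1:ℕ)+1) * (m*s) ^ (k+1) * t := by push_cast; ring
        _ ≤ (m*s + t) ^ ((k+1)+1) := hb1
        _ = w s ^ (k+2) := by rw [hwseq]
        _ ≤ s ^ (k+1) * I1 := H1
    exact le_of_mul_le_mul_left key (pow_pos hspos (k+1))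
  have hdiffeq : w a - w s = m * b - t := by rw [hwam, hwseq, hB]; ring
  have hI2low : m ^ (k+2) * b * b - (k+2) * m ^ (k+1) * t * b + m ^ k * t ^ 2 ≤ b * I2 := by
    have hmb := mbern (m*b) t (by positivity) ht.le htmb.le k
    have key : b ^ (k+1) * (m ^ (k+2) * b * b - (k+2) * m ^ (k+1) * t * b + m ^ k * t ^ 2)
        ≤ b ^ (k+1) * (b * I2) := by
      calc b ^ (k+1) * (m ^ (k+2) * b * b - (k+2) * m ^ (k+1) * t * b + m ^ k * t ^ 2)
          = b * ((m*b) ^ (k+2) - (k+2) * (m*b) ^ (k+1) * t + (m*b) ^ k * t ^ 2) := by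
            push_cast; ring
        _ ≤ b * (m*b - t) ^ (k+2) := mul_le_mul_of_nonneg_left hmb hb.le
        _ = b * (w a - w s) ^ (k+2) := by rw [hdiffeq]
        _ ≤ b * (b ^ (k+1) * I2) := mul_le_mul_of_nonneg_left H2 hb.le
        _ = b ^ (k+1) * (b * I2) := by ring
    exact le_of_mul_le_mul_left key (pow_pos hb (k+1))
  -- combine
  have hma : m ^ (k+2) * a = 1 - δ := by
    have h : a ^ (k+1) * (m ^ (k+2) * a) = a ^ (k+1) * (1 - δ) := by
      rw [hwam] at hwaN
      calc a ^ (k+1) * (m ^ (k+2) * a) = (m * a) ^ (k+2) := by ring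
        _ = (1-δ) * a ^ (k+1) := hwaN
        _ = a ^ (k+1) * (1 - δ) := by ring
    exact mul_left_cancel₀ (pow_pos ha0 (k+1)).ne' h
  have hc1 : b * I1 + b * I2 ≤ b := by
    have h := mul_le_mul_of_nonneg_left hsum hb.le
    linarith only [h]
  have hA : m ^ (k+2) * s * b + (k+2) * m ^ (k+1) * t * b ≤ b * I1 := by
    calc m ^ (k+2) * s * b + (k+2) * m ^ (k+1) * t * b
        = b * (m ^ (k+2) * s + (k+2) * m ^ (k+1) * t) := by ring
      _ ≤ b * I1 := mul_le_mul_of_nonneg_left hI1low hb.le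
  have eSB : m ^ (k+2) * a * b = m ^ (k+2) * s * b + m ^ (k+2) * b * b := by
    rw [hB]; ring
  have hCombine : m ^ (k+2) * a * b + m ^ k * t ^ 2 ≤ b := by
    linarith only [hA, hI2low, hc1, eSB]
  have e2 : m ^ (k+2) * a * b = (1 - δ) * b := by
    rw [show m ^ (k+2) * a * b = (m ^ (k+2) * a) * b by ring, hma]
  have hkey : m ^ k * t ^ 2 ≤ δ * b := by linarith only [hCombine, e2]
  -- conclude via square roots
  have ht2 : t ^ 2 ≤ δ * b / m ^ k := by
    rw [le_div_iff₀ (pow_pos hmpos k)]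
    linarith only [hkey]
  have hsq : t ≤ Real.sqrt (δ * b / m ^ k) := by
    calc t = Real.sqrt (t ^ 2) := (Real.sqrt_sq ht.le).symm
      _ ≤ _ := Real.sqrt_le_sqrt ht2
  have hsqrt_eq : Real.sqrt (δ * b / m ^ k)
      = b ^ ((1:ℝ)/2) * δ ^ ((1:ℝ)/2) * m ^ (-((((k+2:ℕ) : ℝ) - 2) / 2)) := by
    have e3 : δ * b / m ^ k = δ * (b * (m ^ k)⁻¹) := by ring
    rw [e3, Real.sqrt_mul hδ0, Real.sqrt_mul hb.le, Real.sqrt_inv]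
    have e4 : (Real.sqrt (m ^ k))⁻¹ = m ^ (-((((k+2:ℕ) : ℝ) - 2) / 2)) := by
      rw [Real.sqrt_eq_rpow, ← Real.rpow_natCast m k, ← Real.rpow_mul hmpos.le,
        ← Real.rpow_neg hmpos.le]
      congr 1
      push_cast
      ring
    rw [e4, Real.sqrt_eq_rpow, Real.sqrt_eq_rpow]
    ring
  calc w s = m * s + t := hwseq
    _ ≤ m * s + Real.sqrt (δ * b / m ^ k) := by linarith [hsq]
    _ = s * m + b ^ ((1:ℝ)/2) * δ ^ ((1:ℝ)/2) * m ^ (-((((k+2:ℕ) : ℝ) - 2) / 2)) := by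
        rw [hsqrt_eq]; ring
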